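/- Let MF be the Milnor group on generators m₂, m₃, m₄ and let γ₃ denote the third term of its lower central series. Then any element of γ₃ is central in MF; in particular, for any w ∈ γ₃ and any g ∈ MF, g⁻¹wg = w. -/

import Mathlib

/-- Normal closure of a singleton is abelian if all conjugates commute. -/
lemma normalClosure_singleton_comm {G : Type*} [Group G] (s : G)
    (h : ∀ x y : G, Commute (x⁻¹ * s * x) (y⁻¹ * s * y)) :
    ∀ a ∈ Subgroup.normalClosure {s}, ∀ b ∈ Subgroup.normalClosure {s}, Commute a b := by
  have hconj : ∀ t ∈ Group.conjugatesOfSet ({s} : Set G), ∃ x : G, t = x⁻¹ * s * x := by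
    intro t ht
    rw [Group.mem_conjugatesOfSet_iff] at ht
    obtain ⟨a, ha, hc⟩ := ht
    rw [Set.mem_singleton_iff] at ha
    subst ha
    obtain ⟨c, hc⟩ := isConj_iff.mp hc
    exact ⟨c⁻¹, by group; rw [← hc]; group⟩
  have key : ∀ b ∈ Subgroup.normalClosure {s},
      ∀ t ∈ Group.conjugatesOfSet ({s} : Set G), Commute t b := by
    intro b hb
    rw [Subgroup.normalClosure] at hb
    induction hb using Subgroup.closure_induction with
    | mem u hu =>
      intro t ht
      obtain ⟨x, rfl⟩ := hconj t ht
      obtain ⟨y, rfl⟩ := hconj u hu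
      exact h x y
    | one => exact fun t _ => Commute.one_right t
    | mul u v _ _ hu hv => exact fun t ht => (hu t ht).mul_right (hv t ht)
    | inv u _ hu => exact fun t ht => (hu t ht).inv_right
  intro a ha b hb
  rw [Subgroup.normalClosure] at ha
  induction ha using Subgroup.closure_induction with
  | mem t ht => exact key b hb t ht
  | one => exact Commute.one_left b
  | mul u v _ _ hu hv => exact hu.mul_left hv
  | inv u _ hu => exact hu.inv_left

/-- A group generated by `n+1` elements, all conjugates of each of which
pairwise commute, has `γ_{n+2}` trivial, i.e. `γ_{n+1}` central. -/
lemma milnor_lcs_le_center : ∀ (n : ℕ) (G : Type) [Group G] (S : Finset G),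
    S.card ≤ n + 1 → Subgroup.closure (S : Set G) = ⊤ →
    (∀ s ∈ S, ∀ x y : G, Commute (x⁻¹ * s * x) (y⁻¹ * s * y)) →
    (⊤ : Subgroup G).lowerCentralSeries n ≤ Subgroup.center G := by
  intro n
  induction n with
  | zero =>
    intro G _ S hcard hgen _
    -- G is cyclic, hence abelian
    have : ∃ s : G, (⊤ : Subgroup G) ≤ Subgroup.zpowers s := by
      rcases S.eq_empty_or_nonempty with rfl | ⟨s, hs⟩
      · refine ⟨1, ?_⟩
        rw [← hgen]
        simp
      · refine ⟨s, ?_⟩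
        rw [← hgen, Subgroup.zpowers_eq_closure]
        apply Subgroup.closure_mono
        intro a ha
        simpa using Finset.card_le_one.mp hcard a ha s hs
    obtain ⟨s, hs⟩ := this
    intro w _
    rw [Subgroup.mem_center_iff]
    intro g
    obtain ⟨a, ha⟩ := Subgroup.mem_zpowers_iff.mp (hs (Subgroup.mem_top w))
    obtain ⟨b, hb⟩ := Subgroup.mem_zpowers_iff.mp (hs (Subgroup.mem_top g))
    rw [← ha, ← hb]
    exact ((Commute.refl s).zpow_zpow b a)
  | succ n ih =>
    intro G _ S hcard hgen hcomm
    intro w hw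
    rw [Subgroup.mem_center_iff]
    -- it suffices that w commutes with each generator
    suffices hS : ∀ s ∈ S, Commute w s by
      intro g
      have : g ∈ Subgroup.centralizer {w} := by
        have : (⊤ : Subgroup G) ≤ Subgroup.centralizer {w} := by
          rw [← hgen, Subgroup.closure_le]
          intro t ht
          rw [SetLike.mem_coe, Subgroup.mem_centralizer_iff]
          intro h hh
          rw [Set.mem_singleton_iff] at hh
          subst hh
          exact (hS t ht).eq
        exact this (Subgroup.mem_top g)
      rw [Subgroup.mem_centralizer_iff] at this
      exact (this w rfl).symm
    intro s hs
    classical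
    set N := Subgroup.normalClosure ({s} : Set G) with hN
    have hNnorm : N.Normal := Subgroup.normalClosure_normal
    let π : G →* G ⧸ N := QuotientGroup.mk' N
    have hπsurj : Function.Surjective π := QuotientGroup.mk'_surjective N
    -- generators of the quotient
    set S' : Finset (G ⧸ N) := (S.erase s).image π with hS'
    have hcard' : S'.card ≤ n + 1 := by
      calc S'.card ≤ (S.erase s).card := Finset.card_image_le
        _ = S.card - 1 := Finset.card_erase_of_mem hs
        _ ≤ n + 1 := by omega
    have hgen' : Subgroup.closure (S' : Set (G ⧸ N)) = ⊤ := by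
      have h1 : Subgroup.closure (π '' (S : Set G)) = ⊤ := by
        rw [← MonoidHom.map_closure, hgen]
        rw [← MonoidHom.range_eq_map]
        exact MonoidHom.range_eq_top_of_surjective π hπsurj
      rw [eq_top_iff, ← h1, Subgroup.closure_le]
      rintro t ⟨u, hu, rfl⟩
      by_cases hus : u = s
      · subst hus
        have : π u = 1 := (QuotientGroup.eq_one_iff u).mpr
          (Subgroup.subset_normalClosure rfl)
        rw [this]
        exact Subgroup.one_mem _
      · apply Subgroup.subset_closure
        rw [hS', Finset.coe_image]
        exact ⟨u, Finset.mem_erase.mpr ⟨hus, hu⟩, rfl⟩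
    have hcomm' : ∀ t ∈ S', ∀ x y : G ⧸ N, Commute (x⁻¹ * t * x) (y⁻¹ * t * y) := by
      intro t ht x y
      rw [hS', Finset.mem_image] at ht
      obtain ⟨u, hu, rfl⟩ := ht
      obtain ⟨x', rfl⟩ := hπsurj x
      obtain ⟨y', rfl⟩ := hπsurj y
      have := (hcomm u (Finset.mem_of_mem_erase hu) x' y').map π
      simpa using this
    have hcent' := ih (G ⧸ N) S' hcard' hgen' hcomm'
    have hbot : (⊤ : Subgroup (G ⧸ N)).lowerCentralSeries (n + 1) = ⊥ :=
      lowerCentralSeries_succ_eq_bot ⊤ hcent'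
    have hwN : w ∈ N := by
      have : π w ∈ (⊤ : Subgroup (G ⧸ N)).lowerCentralSeries (n + 1) :=
        lowerCentralSeries.map π (n + 1) ⟨w, hw, rfl⟩
      rw [hbot, Subgroup.mem_bot] at this
      exact (QuotientGroup.eq_one_iff w).mp this
    exact normalClosure_singleton_comm s (hcomm s hs) w hwN s
      (Subgroup.subset_normalClosure rfl)



/-- Milnor relators: commutators of two conjugates of the same generator. -/
def milnorRelators (n : ℕ) : Set (FreeGroup (Fin n)) :=
  {w | ∃ (i : Fin n) (x y : FreeGroup (Fin n)),
    w = (x⁻¹ * FreeGroup.of i * x)⁻¹ * (y⁻¹ * FreeGroup.of i * y)⁻¹ *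
        (x⁻¹ * FreeGroup.of i * x) * (y⁻¹ * FreeGroup.of i * y)}

/-- The free Milnor group on `n` generators. -/
def MilnorGroup (n : ℕ) : Type :=
  FreeGroup (Fin n) ⧸ Subgroup.normalClosure (milnorRelators n)

noncomputable instance (n : ℕ) : Group (MilnorGroup n) :=
  QuotientGroup.Quotient.group _

/-- In the free Milnor group on three generators, every element of the third
term `γ₃` of the lower central series (`lowerCentralSeries _ 2` in Mathlib's
indexing, where `lowerCentralSeries G 0 = ⊤ = γ₁`) is central: conjugation
acts trivially on it. -/
theorem gamma3_central_in_milnor (w : MilnorGroup 3)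
    (hw : w ∈ (⊤ : Subgroup (MilnorGroup 3)).lowerCentralSeries 2) (g : MilnorGroup 3) :
    g⁻¹ * w * g = w := by
  classical
  let π : FreeGroup (Fin 3) →* MilnorGroup 3 :=
    QuotientGroup.mk' (Subgroup.normalClosure (milnorRelators 3))
  have hπsurj : Function.Surjective π := QuotientGroup.mk'_surjective _
  set S : Finset (MilnorGroup 3) :=
    Finset.univ.image (fun i : Fin 3 => π (FreeGroup.of i)) with hS
  have hcard : S.card ≤ 2 + 1 := le_trans Finset.card_image_le (by simp)
  have hgen : Subgroup.closure (S : Set (MilnorGroup 3)) = ⊤ := by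
    have : (S : Set (MilnorGroup 3)) = π '' Set.range FreeGroup.of := by
      rw [hS, Finset.coe_image, Finset.coe_univ, Set.image_univ,
        ← Set.range_comp]
      rfl
    rw [this, ← MonoidHom.map_closure, FreeGroup.closure_range_of,
      ← MonoidHom.range_eq_map]
    exact MonoidHom.range_eq_top_of_surjective π hπsurj
  have hcomm : ∀ s ∈ S, ∀ x y : MilnorGroup 3,
      Commute (x⁻¹ * s * x) (y⁻¹ * s * y) := by
    intro s hs x y
    rw [hS, Finset.mem_image] at hs
    obtain ⟨i, -, rfl⟩ := hs
    obtain ⟨x', rfl⟩ := hπsurj x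
    obtain ⟨y', rfl⟩ := hπsurj y
    have hrel : π ((x'⁻¹ * FreeGroup.of i * x')⁻¹ * (y'⁻¹ * FreeGroup.of i * y')⁻¹ *
        (x'⁻¹ * FreeGroup.of i * x') * (y'⁻¹ * FreeGroup.of i * y')) = 1 :=
      (QuotientGroup.eq_one_iff _).mpr
        (Subgroup.subset_normalClosure ⟨i, x', y', rfl⟩)
    set a := π (FreeGroup.of i)
    have ha : (π x')⁻¹ * a * π x' = π (x'⁻¹ * FreeGroup.of i * x') := by
      simp [a]
    have hb : (π y')⁻¹ * a * π y' = π (y'⁻¹ * FreeGroup.of i * y') := by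
      simp [a]
    rw [ha, hb]
    open scoped commutatorElement in
    have : ⁅(π (x'⁻¹ * FreeGroup.of i * x'))⁻¹, (π (y'⁻¹ * FreeGroup.of i * y'))⁻¹⁆ = 1 := by
      rw [commutatorElement_def]
      simpa [map_mul, map_inv, mul_assoc] using hrel
    have := commutatorElement_eq_one_iff_commute.mp this
    simpa using this.inv_left.inv_right
  have hcent := milnor_lcs_le_center 2 (MilnorGroup 3) S hcard hgen hcomm
  have := Subgroup.mem_center_iff.mp (hcent hw) g
  rw [mul_assoc, ← this, ← mul_assoc, inv_mul_cancel, one_mul]
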